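/- Let n ≥ 1, let B and A be symmetric real n×n matrices with B positive definite and A positive definite, let τ > 0 and σ ∈ ℝ, and assume B + στA is invertible. Suppose that for every y ∈ ℝⁿ the unique y' ∈ ℝⁿ satisfying B((y' − y)/τ) + A(σ y' + (1−σ) y) = 0 obeys ‖y'‖_A ≤ ‖y‖_A, where ‖x‖_A = √(xᵀ A x). Then the matrix B + (σ − 1/2) τ A is positive semidefinite. -/

import Mathlib

open Matrix

/-- The `A`-weighted norm `‖x‖_A = √(xᵀ A x)`. -/
noncomputable def normA {n : ℕ} (A : Matrix (Fin n) (Fin n) ℝ) (x : Fin n → ℝ) : ℝ :=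
  Real.sqrt (x ⬝ᵥ A *ᵥ x)

/-- Symmetric bilinear form symmetry for a Hermitian real matrix. -/
lemma dot_symm {n : ℕ} {A : Matrix (Fin n) (Fin n) ℝ} (hA : A.IsHermitian)
    (x y : Fin n → ℝ) : x ⬝ᵥ A *ᵥ y = y ⬝ᵥ A *ᵥ x := by
  have h : Aᵀ = A := by
    have := hA
    rwa [Matrix.IsHermitian, Matrix.conjTranspose_eq_transpose_of_trivial] at this
  calc x ⬝ᵥ A *ᵥ y = x ᵥ* A ⬝ᵥ y := dotProduct_mulVec x A y
    _ = x ᵥ* Aᵀ ⬝ᵥ y := by rw [h]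
    _ = (A *ᵥ x) ⬝ᵥ y := by rw [vecMul_transpose]
    _ = y ⬝ᵥ A *ᵥ x := dotProduct_comm _ _

theorem weighted_scheme_stability_necessity
    {n : ℕ} (hn : 1 ≤ n)
    (B A : Matrix (Fin n) (Fin n) ℝ)
    (hB : B.PosDef) (hA : A.PosDef)
    (τ σ : ℝ) (hτ : 0 < τ)
    (hinv : IsUnit (B + (σ * τ) • A))
    (hstable : ∀ y y' : Fin n → ℝ,
      B *ᵥ ((1 / τ) • (y' - y)) + A *ᵥ (σ • y' + (1 - σ) • y) = 0 →
        normA A y' ≤ normA A y) :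
    (B + ((σ - 1 / 2) * τ) • A).PosSemidef := by
  have hAH : Aᵀ = A := by
    have := hA.1
    rwa [Matrix.IsHermitian, Matrix.conjTranspose_eq_transpose_of_trivial] at this
  have hBH : Bᵀ = B := by
    have := hB.1
    rwa [Matrix.IsHermitian, Matrix.conjTranspose_eq_transpose_of_trivial] at this
  rw [Matrix.posSemidef_iff_dotProduct_mulVec]
  constructor
  · -- Hermitian
    rw [Matrix.IsHermitian, Matrix.conjTranspose_eq_transpose_of_trivial,
      Matrix.transpose_add, Matrix.transpose_smul, hAH, hBH]
  intro v
  -- define y so that v = y' - y is realizable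
  set y : Fin n → ℝ := (-(1 / τ)) • (A⁻¹ *ᵥ ((B + (σ * τ) • A) *ᵥ v)) with hy
  set y' : Fin n → ℝ := y + v with hy'
  have hAinv : A * A⁻¹ = 1 := Matrix.mul_nonsing_inv A (isUnit_iff_ne_zero.mpr hA.det_pos.ne')
  have hAy : A *ᵥ y = (-(1 / τ)) • ((B + (σ * τ) • A) *ᵥ v) := by
    rw [hy, Matrix.mulVec_smul, Matrix.mulVec_mulVec, hAinv, Matrix.one_mulVec]
  have heq : B *ᵥ ((1 / τ) • (y' - y)) + A *ᵥ (σ • y' + (1 - σ) • y) = 0 := by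
    have h1 : y' - y = v := by rw [hy']; abel
    have h2 : σ • y' + (1 - σ) • y = y + σ • v := by
      rw [hy']; module
    rw [h1, h2, Matrix.mulVec_add, hAy, Matrix.mulVec_smul, Matrix.mulVec_smul,
      Matrix.add_mulVec, Matrix.smul_mulVec]
    have hτ' : τ ≠ 0 := ne_of_gt hτ
    funext i
    simp only [Pi.add_apply, Pi.smul_apply, Pi.neg_apply, Pi.zero_apply, smul_eq_mul,
      neg_mul, mul_add]
    field_simp
    ring
  have hle : normA A y' ≤ normA A y := hstable y y' heq
  -- square the inequality
  have hq' : 0 ≤ y' ⬝ᵥ A *ᵥ y' := by simpa using hA.posSemidef.dotProduct_mulVec_nonneg y'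
  have hq : 0 ≤ y ⬝ᵥ A *ᵥ y := by simpa using hA.posSemidef.dotProduct_mulVec_nonneg y
  have hsq : y' ⬝ᵥ A *ᵥ y' ≤ y ⬝ᵥ A *ᵥ y := by
    simp only [normA] at hle
    have := mul_self_le_mul_self (Real.sqrt_nonneg _) hle
    rwa [Real.mul_self_sqrt hq', Real.mul_self_sqrt hq] at this
  -- energy identity
  have hvAy : v ⬝ᵥ A *ᵥ y = -(1 / τ) * (v ⬝ᵥ B *ᵥ v) - σ * (v ⬝ᵥ A *ᵥ v) := by
    rw [hAy, dotProduct_smul, Matrix.add_mulVec, Matrix.smul_mulVec,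
      dotProduct_add, dotProduct_smul]
    have hτ' : τ ≠ 0 := ne_of_gt hτ
    field_simp
    have hττ : τ * τ⁻¹ = 1 := mul_inv_cancel₀ hτ'
    linear_combination (-(v ⬝ᵥ B *ᵥ v) - τ * (v ⬝ᵥ A *ᵥ v) * σ) * hττ
  have hexp : y' ⬝ᵥ A *ᵥ y' =
      y ⬝ᵥ A *ᵥ y + 2 * (v ⬝ᵥ A *ᵥ y) + v ⬝ᵥ A *ᵥ v := by
    rw [hy', Matrix.mulVec_add, dotProduct_add, add_dotProduct, add_dotProduct,
      dot_symm hA.1 y v]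
    ring
  have key : y ⬝ᵥ A *ᵥ y - y' ⬝ᵥ A *ᵥ y' =
      (2 / τ) * (v ⬝ᵥ (B + ((σ - 1 / 2) * τ) • A) *ᵥ v) := by
    rw [hexp, hvAy, Matrix.add_mulVec, Matrix.smul_mulVec, dotProduct_add,
      dotProduct_smul]
    have hτ' : τ ≠ 0 := ne_of_gt hτ
    field_simp
    ring
  have h2 : 0 ≤ (2 / τ) * (v ⬝ᵥ (B + ((σ - 1 / 2) * τ) • A) *ᵥ v) := by
    rw [← key]; linarith
  have h3 : 0 < 2 / τ := by positivity
  have := nonneg_of_mul_nonneg_right h2 h3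
  simpa using this
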